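/- arXiv:2308.12948 — 2 statements merged into one kernel-verified Lean document; each statement's English description precedes it below -/
import Mathlib

section
/- Let k, ℓ, m ≥ 1 be integers and let d satisfy d > k + ℓ + m + 2 and d > 2·max(k, ℓ, m) + 2. Then for all z, a, b ∈ ℤ^d, ∑_{y,y'∈ℤ^d} (g(y)·g(y−y') + g(y')·g(y−y'))·F_{k,ℓ,m}(z, a+y, b+y') = F_{k+1,ℓ+1,m}(z,a,b) + F_{k+1,ℓ,m+1}(z,a,b). -/
open MeasureTheory ProbabilityTheory Filter Pointwise
open scoped ENNReal Topology

/-- Lattice points of `ℤ^d`. -/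
abbrev Zd (d : ℕ) := Fin d → ℤ

/-- Euclidean norm on `ℤ^d`. -/
noncomputable def znorm {d : ℕ} (x : Zd d) : ℝ := Real.sqrt (∑ i, ((x i : ℝ)) ^ 2)

/-- Euclidean diameter of a subset of `ℤ^d`. -/
noncomputable def zdiam {d : ℕ} (A : Set (Zd d)) : ℝ :=
  sSup ((fun p : Zd d × Zd d => znorm (p.1 - p.2)) '' (A ×ˢ A))

/-- The `2d` unit vectors `±e_1, …, ±e_d`. -/
def stepSet (d : ℕ) : Finset (Zd d) :=
  (Finset.univ.image fun i : Fin d => (Pi.single i 1 : Zd d)) ∪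
  (Finset.univ.image fun i : Fin d => (Pi.single i (-1) : Zd d))

/-- `walkP d n x` is the probability that a simple random walk started at `0`
is at `x` at time `n`. -/
noncomputable def walkP (d : ℕ) : ℕ → Zd d → ℝ≥0∞
  | 0, x => if x = 0 then 1 else 0
  | (n + 1), x => ((stepSet d).card : ℝ≥0∞)⁻¹ * ∑ s ∈ stepSet d, walkP d n (x - s)

/-- The Green's function `g(x) = ∑_{n ≥ 0} P(X_n = x)` of the simple random walk on `ℤ^d`. -/
noncomputable def green (d : ℕ) (x : Zd d) : ℝ≥0∞ := ∑' n, walkP d n x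

/-- `GreenK d k` is the `k`-fold convolution power of the Green's function `green d`. -/
noncomputable def GreenK (d : ℕ) : ℕ → Zd d → ℝ≥0∞
  | 0, x => if x = 0 then 1 else 0
  | (k + 1), x => ∑' y : Zd d, GreenK d k y * green d (x - y)

/-- The uniform distribution on the `2d` unit vectors, as a measure on `ℤ^d`. -/
noncomputable def stepMeasure (d : ℕ) : Measure (Zd d) :=
  ((stepSet d).card : ℝ≥0∞)⁻¹ • ∑ s ∈ stepSet d, Measure.dirac s

/-- `X` is a simple random walk on `ℤ^d` under the measure `P`: it starts at `0` and its
increments are i.i.d. uniform on the `2d` unit vectors. -/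
structure IsSRW {Ω : Type} [MeasurableSpace Ω] (P : Measure Ω) {d : ℕ}
    (X : ℕ → Ω → Zd d) : Prop where
  meas : ∀ n, Measurable (X n)
  init : ∀ᵐ ω ∂P, X 0 ω = 0
  indep : iIndepFun (fun n ω => X (n + 1) ω - X n ω) P
  ident : ∀ n, P.map (fun ω => X (n + 1) ω - X n ω) = stepMeasure d

/-- A family of `N` independent simple random walks on `ℤ^d`. -/
def IndepSRWs {Ω : Type} [MeasurableSpace Ω] (P : Measure Ω) {d N : ℕ}
    (X : Fin N → ℕ → Ω → Zd d) : Prop :=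
  (∀ i, IsSRW P (X i)) ∧ iIndepFun (fun i ω => fun n => X i n ω) P

/-- The range `{X_0, …, X_n}` of a walk up to time `n`. -/
def rangeTo {Ω : Type} {d : ℕ} (X : ℕ → Ω → Zd d) (n : ℕ) (ω : Ω) : Set (Zd d) :=
  {y | ∃ k ≤ n, X k ω = y}

/-- The total range `{X_n : n ≥ 0}` of a walk. -/
def rangeInf {Ω : Type} {d : ℕ} (X : ℕ → Ω → Zd d) (ω : Ω) : Set (Zd d) :=
  {y | ∃ k : ℕ, X k ω = y}

/-- Capacity of `A` with respect to a kernel `K`: the inverse of the infimum of the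
`K`-energies of probability measures supported on `A`. -/
noncomputable def capK {d : ℕ} (K : Zd d → Zd d → ℝ) (A : Set (Zd d)) : ℝ :=
  (sInf {E : ℝ | ∃ ν : Zd d → ℝ, (∀ x, 0 ≤ ν x) ∧ (∀ x ∉ A, ν x = 0) ∧
      (Function.support ν).Finite ∧ (∑ᶠ x, ν x = 1) ∧
      E = ∑ᶠ x, ∑ᶠ y, K x y * ν x * ν y})⁻¹

/-- The `γ`-capacity, associated with the kernel `(1 + ‖x - y‖)^{-γ}`. -/
noncomputable def capGamma {d : ℕ} (γ : ℝ) (A : Set (Zd d)) : ℝ :=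
  capK (fun x y => (1 + znorm (x - y)) ^ (-γ)) A

/-- The (Newtonian) capacity, associated with the Green's function kernel `g(y - x)`. -/
noncomputable def capGreen (d : ℕ) (A : Set (Zd d)) : ℝ :=
  capK (fun x y => (green d (y - x)).toReal) A

/-- Local time at `x` of the multiparameter process `z + X¹_{t₁} + ⋯ + X^N_{t_N}`. -/
noncomputable def localTime {Ω : Type} {d N : ℕ} (X : Fin N → ℕ → Ω → Zd d)
    (z x : Zd d) (ω : Ω) : ℝ≥0∞ :=
  ∑' t : Fin N → ℕ, if z + ∑ i, X i (t i) ω = x then 1 else 0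

/-- `F_{k,ℓ,m}(z,a,b) = ∑_w G_k(z-b+w) G_ℓ(w) G_m(a-b+w)`. -/
noncomputable def Fklm (d k l m : ℕ) (z a b : Zd d) : ℝ≥0∞ :=
  ∑' w : Zd d, GreenK d k (z - b + w) * GreenK d l w * GreenK d m (a - b + w)

/-- A double-sided simple random walk indexed by `ℤ`: both one-sided parts are simple
random walks, independent of each other. -/
structure IsTwoSidedSRW {Ω : Type} [MeasurableSpace Ω] (P : Measure Ω) {d : ℕ}
    (Y : ℤ → Ω → Zd d) : Prop where
  pos : IsSRW P (fun n ω => Y (n : ℤ) ω)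
  neg : IsSRW P (fun n ω => Y (-(n : ℤ)) ω)
  indep : IndepFun (fun ω => fun n : ℕ => Y (n : ℤ) ω) (fun ω => fun n : ℕ => Y (-(n : ℤ)) ω) P

/-- A family of `N` independent double-sided simple random walks. -/
def IndepTwoSidedSRWs {Ω : Type} [MeasurableSpace Ω] (P : Measure Ω) {d N : ℕ}
    (Y : Fin N → ℤ → Ω → Zd d) : Prop :=
  (∀ i, IsTwoSidedSRW P (Y i)) ∧
    iIndepFun (fun i ω => fun n : ℤ => Y i n ω) P

open Classical in
/-- `ℝ≥0∞`-valued indicator of a proposition. -/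
noncomputable def ind (p : Prop) : ℝ≥0∞ := if p then 1 else 0


lemma neg_mem_stepSet {d : ℕ} {s : Zd d} (h : s ∈ stepSet d) : -s ∈ stepSet d := by
  simp only [stepSet, Finset.mem_union, Finset.mem_image, Finset.mem_univ, true_and] at h ⊢
  rcases h with ⟨i, rfl⟩ | ⟨i, rfl⟩
  · right; exact ⟨i, by ext j; simp [Pi.single_apply, apply_ite]⟩
  · left; exact ⟨i, by ext j; simp [Pi.single_apply, apply_ite]⟩

lemma walkP_neg (d : ℕ) : ∀ n (x : Zd d), walkP d n (-x) = walkP d n x := by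
  intro n
  induction n with
  | zero => intro x; simp [walkP, neg_eq_zero]
  | succ n ih =>
    intro x
    simp only [walkP]
    congr 1
    calc ∑ s ∈ stepSet d, walkP d n (-x - s)
        = ∑ s ∈ stepSet d, walkP d n (x + s) := by
          refine Finset.sum_congr rfl fun s _ => ?_
          rw [show -x - s = -(x + s) by abel, ih]
      _ = ∑ s ∈ stepSet d, walkP d n (x - s) := by
          refine Finset.sum_nbij' (fun s => -s) (fun s => -s)
            (fun a ha => neg_mem_stepSet ha) (fun a ha => neg_mem_stepSet ha)
            (fun a _ => neg_neg a) (fun a _ => neg_neg a) (fun a _ => ?_)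
          rw [sub_neg_eq_add]

lemma green_neg (d : ℕ) (x : Zd d) : green d (-x) = green d x :=
  tsum_congr fun n => walkP_neg d n x

lemma GreenK_succ (d k : ℕ) (x : Zd d) :
    GreenK d (k + 1) x = ∑' y : Zd d, GreenK d k y * green d (x - y) := rfl

/-- Change of variables for Claim 3.1, first term. -/
def cvEquiv1 {d : ℕ} (c : Zd d) : (Zd d × Zd d) × Zd d ≃ Zd d × Zd d × Zd d where
  toFun q := (q.2 - q.1.2 + q.1.1, c + q.2 - q.1.2, q.2)
  invFun r := ((r.1 + c - r.2.1, c + r.2.2 - r.2.1), r.2.2)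
  left_inv := by
    rintro ⟨⟨y, y'⟩, w⟩
    simp only [Prod.mk.injEq]
    exact ⟨⟨by abel, by abel⟩, trivial⟩
  right_inv := by
    rintro ⟨w, u, v⟩
    simp only [Prod.mk.injEq]
    exact ⟨by abel, by abel, trivial⟩

/-- Change of variables for Claim 3.1, second term. -/
def cvEquiv2 {d : ℕ} (c₁ c₂ : Zd d) : (Zd d × Zd d) × Zd d ≃ Zd d × Zd d × Zd d where
  toFun q := (q.2, c₁ + q.2 - q.1.2, c₂ + q.2 - q.1.2 + q.1.1)
  invFun r := ((r.2.2 - c₂ + c₁ - r.2.1, c₁ + r.1 - r.2.1), r.1)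
  left_inv := by
    rintro ⟨⟨y, y'⟩, w⟩
    simp only [Prod.mk.injEq]
    exact ⟨⟨by abel, by abel⟩, trivial⟩
  right_inv := by
    rintro ⟨w, u, v⟩
    simp only [Prod.mk.injEq]
    exact ⟨trivial, by abel, by abel⟩

/-- Expanded summand for `F_{k+1,l+1,m}`. -/
noncomputable def R1 (d k l m : ℕ) (z a b : Zd d) (r : Zd d × Zd d × Zd d) : ℝ≥0∞ :=
  GreenK d k r.2.1 * green d (z - b + r.1 - r.2.1) *
    (GreenK d l r.2.2 * green d (r.1 - r.2.2)) * GreenK d m (a - b + r.1)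

/-- Expanded summand for `F_{k+1,l,m+1}`. -/
noncomputable def R2 (d k l m : ℕ) (z a b : Zd d) (r : Zd d × Zd d × Zd d) : ℝ≥0∞ :=
  GreenK d k r.2.1 * green d (z - b + r.1 - r.2.1) * GreenK d l r.1 *
    (GreenK d m r.2.2 * green d (a - b + r.1 - r.2.2))

lemma Fklm_T1 (d k l m : ℕ) (z a b : Zd d) :
    ∑' p : Zd d × Zd d,
      green d p.1 * green d (p.1 - p.2) * Fklm d k l m z (a + p.1) (b + p.2)
    = Fklm d (k + 1) (l + 1) m z a b := by
  have hRHS : (∑' r : Zd d × Zd d × Zd d, R1 d k l m z a b r)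
      = Fklm d (k + 1) (l + 1) m z a b := by
    rw [Fklm, ENNReal.tsum_prod' (f := R1 d k l m z a b)]
    refine tsum_congr fun w => ?_
    rw [ENNReal.tsum_prod' (f := fun p => R1 d k l m z a b (w, p))]
    calc ∑' (u : Zd d) (v : Zd d), R1 d k l m z a b (w, u, v)
        = ∑' u : Zd d, GreenK d k u * green d (z - b + w - u) *
            (∑' v : Zd d, GreenK d l v * green d (w - v)) * GreenK d m (a - b + w) := by
          refine tsum_congr fun u => ?_
          simp only [R1]
          rw [ENNReal.tsum_mul_right, ENNReal.tsum_mul_left]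
      _ = (∑' u : Zd d, GreenK d k u * green d (z - b + w - u)) *
            (∑' v : Zd d, GreenK d l v * green d (w - v)) * GreenK d m (a - b + w) := by
          rw [ENNReal.tsum_mul_right, ENNReal.tsum_mul_right]
      _ = GreenK d (k + 1) (z - b + w) * GreenK d (l + 1) w * GreenK d m (a - b + w) := by
          rw [GreenK_succ d k (z - b + w), GreenK_succ d l w]
  rw [← hRHS, ← Equiv.tsum_eq (cvEquiv1 (z - b)) (R1 d k l m z a b),
    ENNReal.tsum_prod' (f := fun q => R1 d k l m z a b (cvEquiv1 (z - b) q))]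
  refine tsum_congr fun p => ?_
  obtain ⟨y, y'⟩ := p
  rw [Fklm, ENNReal.tsum_mul_left.symm]
  refine tsum_congr fun w => ?_
  simp only [R1, cvEquiv1, Equiv.coe_fn_mk]
  have h1 : z - b + (w - y' + y) - (z - b + w - y') = y := by abel
  have h2 : w - y' + y - w = y - y' := by abel
  have h3 : z - (b + y') + w = z - b + w - y' := by abel
  have h4 : a + y - (b + y') + w = a - b + (w - y' + y) := by abel
  rw [h1, h2, h3, h4]
  ring

lemma Fklm_T2 (d k l m : ℕ) (z a b : Zd d) :
    ∑' p : Zd d × Zd d,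
      green d p.2 * green d (p.1 - p.2) * Fklm d k l m z (a + p.1) (b + p.2)
    = Fklm d (k + 1) l (m + 1) z a b := by
  have hRHS : (∑' r : Zd d × Zd d × Zd d, R2 d k l m z a b r)
      = Fklm d (k + 1) l (m + 1) z a b := by
    rw [Fklm, ENNReal.tsum_prod' (f := R2 d k l m z a b)]
    refine tsum_congr fun w => ?_
    rw [ENNReal.tsum_prod' (f := fun p => R2 d k l m z a b (w, p))]
    calc ∑' (u : Zd d) (v : Zd d), R2 d k l m z a b (w, u, v)
        = ∑' u : Zd d, GreenK d k u * green d (z - b + w - u) * GreenK d l w *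
            (∑' v : Zd d, GreenK d m v * green d (a - b + w - v)) := by
          refine tsum_congr fun u => ?_
          simp only [R2]
          rw [ENNReal.tsum_mul_left]
      _ = (∑' u : Zd d, GreenK d k u * green d (z - b + w - u)) * GreenK d l w *
            (∑' v : Zd d, GreenK d m v * green d (a - b + w - v)) := by
          rw [ENNReal.tsum_mul_right, ENNReal.tsum_mul_right]
      _ = GreenK d (k + 1) (z - b + w) * GreenK d l w * GreenK d (m + 1) (a - b + w) := by
          rw [GreenK_succ d k (z - b + w), GreenK_succ d m (a - b + w)]
  rw [← hRHS, ← Equiv.tsum_eq (cvEquiv2 (z - b) (a - b)) (R2 d k l m z a b),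
    ENNReal.tsum_prod' (f := fun q => R2 d k l m z a b (cvEquiv2 (z - b) (a - b) q))]
  refine tsum_congr fun p => ?_
  obtain ⟨y, y'⟩ := p
  rw [Fklm, ENNReal.tsum_mul_left.symm]
  refine tsum_congr fun w => ?_
  simp only [R2, cvEquiv2, Equiv.coe_fn_mk]
  have h1 : z - b + w - (z - b + w - y') = y' := by abel
  have h2 : a - b + w - (a - b + w - y' + y) = y' - y := by abel
  have h3 : z - (b + y') + w = z - b + w - y' := by abel
  have h4 : a + y - (b + y') + w = a - b + w - y' + y := by abel
  have h5 : green d (y - y') = green d (y' - y) := by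
    rw [← green_neg d (y' - y), neg_sub]
  rw [h1, h2, h3, h4, h5]
  ring

/-- Claim 3.1. For `k, ℓ, m ≥ 1` and `d` large enough,
`∑_{y,y'} (g(y) g(y-y') + g(y') g(y-y')) F_{k,ℓ,m}(z, a+y, b+y')
  = F_{k+1,ℓ+1,m}(z,a,b) + F_{k+1,ℓ,m+1}(z,a,b)`. -/
theorem Fklm_convolution_identity (d k l m : ℕ) (hk : 1 ≤ k) (hl : 1 ≤ l) (hm : 1 ≤ m)
    (hd1 : k + l + m + 2 < d) (hd2 : 2 * max k (max l m) + 2 < d) :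
    ∀ z a b : Zd d,
      ∑' p : Zd d × Zd d,
        (green d p.1 * green d (p.1 - p.2) + green d p.2 * green d (p.1 - p.2)) *
          Fklm d k l m z (a + p.1) (b + p.2)
      = Fklm d (k + 1) (l + 1) m z a b + Fklm d (k + 1) l (m + 1) z a b := by
  intro z a b
  rw [← Fklm_T1 d k l m z a b, ← Fklm_T2 d k l m z a b, ← ENNReal.tsum_add]
  exact tsum_congr fun p => by rw [add_mul]
end

section
/- Let N ≥ 1 and d > 2N. Then the set-function f_N is strongly subadditive: for all finite sets A, B ⊆ ℤ^d (with the convention f_N(∅) = 0), f_N(A ∪ B) + f_N(A ∩ B) ≤ f_N(A) + f_N(B). -/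
open MeasureTheory ProbabilityTheory Filter Pointwise
open scoped ENNReal Topology

lemma rangeTo_finite' {Ω : Type} {d : ℕ} (X : ℕ → Ω → Zd d) (n : ℕ) (ω : Ω) :
    (rangeTo X n ω).Finite := by
  have : rangeTo X n ω = (fun k => X k ω) '' Set.Iic n := by
    ext y; simp [rangeTo, Set.mem_image]
  rw [this]
  exact (Set.finite_Iic n).image _

lemma sum_ranges_finite' {Ω : Type} {d N : ℕ} (X : Fin N → ℕ → Ω → Zd d) (n : ℕ) (ω : Ω) :
    (∑ i, rangeTo (X i) n ω).Finite := by
  classical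
  refine Finset.sum_induction _ (fun S : Set (Zd d) => S.Finite)
    (fun a b ha hb => ha.add hb) ?_ (fun i _ => rangeTo_finite' (X i) n ω)
  exact Set.finite_zero

/-- strong subadditivity of `f_N`, equation (2.2). For `N ≥ 1`, `d > 2N`:
if `L_A, L_B, L_{A∪B}, L_{A∩B}` are the a.s. deterministic limits of
`|R¹_n + ⋯ + R^N_n + S|/n^N` for `S = A, B, A ∪ B, A ∩ B` respectively, then
`L_{A∪B} + L_{A∩B} ≤ L_A + L_B`. -/
theorem fN_strong_subadditivity (N d : ℕ) (hN : 1 ≤ N) (hd : 2 * N < d)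
    (Ω : Type) (_ : MeasurableSpace Ω) (P : Measure Ω) (hP : IsProbabilityMeasure P)
    (X : Fin N → ℕ → Ω → Zd d) (hX : IndepSRWs P X)
    (A B : Set (Zd d)) (hA : A.Finite) (hB : B.Finite)
    (LA LB LU LI : ℝ)
    (hLA : ∀ᵐ ω ∂P, Tendsto
      (fun n : ℕ => (((∑ i, rangeTo (X i) n ω) + A).ncard : ℝ) / (n : ℝ) ^ N)
      atTop (𝓝 LA))
    (hLB : ∀ᵐ ω ∂P, Tendsto
      (fun n : ℕ => (((∑ i, rangeTo (X i) n ω) + B).ncard : ℝ) / (n : ℝ) ^ N)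
      atTop (𝓝 LB))
    (hLU : ∀ᵐ ω ∂P, Tendsto
      (fun n : ℕ => (((∑ i, rangeTo (X i) n ω) + (A ∪ B)).ncard : ℝ) / (n : ℝ) ^ N)
      atTop (𝓝 LU))
    (hLI : ∀ᵐ ω ∂P, Tendsto
      (fun n : ℕ => (((∑ i, rangeTo (X i) n ω) + (A ∩ B)).ncard : ℝ) / (n : ℝ) ^ N)
      atTop (𝓝 LI)) :
    LU + LI ≤ LA + LB := by
  -- pick a single ω where all four limits hold
  obtain ⟨ω, hA', hB', hU', hI'⟩ :
      ∃ ω, Tendsto (fun n : ℕ => (((∑ i, rangeTo (X i) n ω) + A).ncard : ℝ) / (n : ℝ) ^ N)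
            atTop (𝓝 LA) ∧
          Tendsto (fun n : ℕ => (((∑ i, rangeTo (X i) n ω) + B).ncard : ℝ) / (n : ℝ) ^ N)
            atTop (𝓝 LB) ∧
          Tendsto (fun n : ℕ => (((∑ i, rangeTo (X i) n ω) + (A ∪ B)).ncard : ℝ) / (n : ℝ) ^ N)
            atTop (𝓝 LU) ∧
          Tendsto (fun n : ℕ => (((∑ i, rangeTo (X i) n ω) + (A ∩ B)).ncard : ℝ) / (n : ℝ) ^ N)
            atTop (𝓝 LI) := by
    have h := ((hLA.and hLB).and (hLU.and hLI))
    obtain ⟨ω, ⟨h1, h2⟩, h3, h4⟩ := h.exists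
    exact ⟨ω, h1, h2, h3, h4⟩
  refine le_of_tendsto_of_tendsto' (hU'.add hI') (hA'.add hB') (fun n => ?_)
  set R := ∑ i, rangeTo (X i) n ω with hR
  have hRfin : R.Finite := sum_ranges_finite' X n ω
  have hRA : (R + A).Finite := hRfin.add hA
  have hRB : (R + B).Finite := hRfin.add hB
  have hkey : ((R + (A ∪ B)).ncard : ℝ) + ((R + (A ∩ B)).ncard : ℝ)
      ≤ ((R + A).ncard : ℝ) + ((R + B).ncard : ℝ) := by
    have hu : R + (A ∪ B) = (R + A) ∪ (R + B) := Set.add_union ..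
    have hi : R + (A ∩ B) ⊆ (R + A) ∩ (R + B) :=
      Set.subset_inter (Set.add_subset_add_left Set.inter_subset_left)
        (Set.add_subset_add_left Set.inter_subset_right)
    have hcard : ((R + A) ∪ (R + B)).ncard + ((R + A) ∩ (R + B)).ncard
        = (R + A).ncard + (R + B).ncard :=
      Set.ncard_union_add_ncard_inter _ _ hRA hRB
    have h1 : (R + (A ∪ B)).ncard = ((R + A) ∪ (R + B)).ncard := by rw [hu]
    have h2 : (R + (A ∩ B)).ncard ≤ ((R + A) ∩ (R + B)).ncard :=
      Set.ncard_le_ncard hi (hRA.inter_of_left _)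
    have : (R + (A ∪ B)).ncard + (R + (A ∩ B)).ncard
        ≤ (R + A).ncard + (R + B).ncard := by omega
    exact_mod_cast this
  rcases Nat.eq_zero_or_pos n with rfl | hn
  · simp [zero_pow (Nat.one_le_iff_ne_zero.mp hN)]
  · have hpos : (0 : ℝ) < (n : ℝ) ^ N := by positivity
    rw [← add_div, ← add_div]
    exact div_le_div_of_nonneg_right hkey hpos.le
end
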